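/- For every $u \geq 0$, $\int_0^1 \frac{1 + (4 - 3s)u}{(1 + su)^3} \cdot \frac{1}{2\sqrt{1-s}}\,ds = 1$. -/

import Mathlib

open Set MeasureTheory intervalIntegral

theorem stmt_4 (u : ℝ) (hu : 0 ≤ u) :
    ∫ s in (0 : ℝ)..1,
      (1 + (4 - 3 * s) * u) / (1 + s * u) ^ 3 * (1 / (2 * Real.sqrt (1 - s))) = 1 := by
  set f' : ℝ → ℝ := fun s =>
    (1 + (4 - 3 * s) * u) / (1 + s * u) ^ 3 * (1 / (2 * Real.sqrt (1 - s))) with hf'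
  set F : ℝ → ℝ := fun s => -Real.sqrt (1 - s) / (1 + s * u) ^ 2 with hF
  have hpos : ∀ s ∈ Set.Icc (0:ℝ) 1, (0:ℝ) < 1 + s * u := fun s hs => by
    nlinarith [hs.1, hs.2]
  have hcont : ContinuousOn F (Set.Icc 0 1) := by
    apply ContinuousOn.div
    · exact ((Real.continuous_sqrt.comp (continuous_const.sub continuous_id)).neg).continuousOn
    · fun_prop
    · intro s hs
      exact pow_ne_zero _ (ne_of_gt (hpos s hs))
  have hderiv : ∀ s ∈ Set.Ioo (0:ℝ) 1, HasDerivWithinAt F (f' s) (Set.Ioi s) s := by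
    intro s hs
    have h1 : (0:ℝ) < 1 - s := by linarith [hs.2]
    have h2 : (0:ℝ) < 1 + s * u := hpos s ⟨hs.1.le, hs.2.le⟩
    have hw : (0:ℝ) < Real.sqrt (1 - s) := Real.sqrt_pos.2 h1
    have hsq : Real.sqrt (1 - s) * Real.sqrt (1 - s) = 1 - s := Real.mul_self_sqrt h1.le
    have hg : HasDerivAt (fun x : ℝ => -Real.sqrt (1 - x))
        (1 / (2 * Real.sqrt (1 - s))) s := by
      have := (Real.hasDerivAt_sqrt (ne_of_gt h1)).comp s
        ((hasDerivAt_id s).const_sub 1)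
      refine this.neg.congr_deriv (Eq.symm ?_)
      field_simp
    have hh : HasDerivAt (fun x : ℝ => (1 + x * u) ^ 2)
        (2 * (1 + s * u) * u) s := by
      have : HasDerivAt (fun x : ℝ => 1 + x * u) u s := by
        simpa using ((hasDerivAt_id s).mul_const u).const_add 1
      refine (this.pow 2).congr_deriv (Eq.symm ?_)
      ring
    have hd := hg.div hh (ne_of_gt (pow_pos h2 2))
    apply HasDerivAt.hasDerivWithinAt
    refine hd.congr_deriv (Eq.symm ?_)
    rw [hf']
    have hrw : Real.sqrt (1 - s) = (1 - s) / Real.sqrt (1 - s) := by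
      field_simp [hsq]
      exact Real.sq_sqrt h1.le
    rw [show -Real.sqrt (1 - s) * (2 * (1 + s * u) * u)
        = -((1 - s) / Real.sqrt (1 - s)) * (2 * (1 + s * u) * u) by rw [← hrw]]
    field_simp
    ring
  have hint : IntervalIntegrable f' MeasureTheory.volume 0 1 := by
    have hbase : IntervalIntegrable (fun s : ℝ => (1 - s) ^ (-(1/2) : ℝ))
        MeasureTheory.volume 0 1 := by
      have := (intervalIntegral.intervalIntegrable_rpow' (a := 0) (b := 1)
        (r := (-(1/2) : ℝ)) (by norm_num)).comp_sub_left 1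
      simpa using this.symm
    have hC : IntervalIntegrable (fun s : ℝ => (1 + 4*u) * (1 - s) ^ (-(1/2) : ℝ))
        MeasureTheory.volume 0 1 := hbase.const_mul _
    apply hC.mono_fun
    · apply Measurable.aestronglyMeasurable
      fun_prop
    · filter_upwards [ae_restrict_mem measurableSet_uIoc] with s hs
      rw [Set.uIoc_of_le (by norm_num : (0:ℝ) ≤ 1)] at hs
      obtain ⟨hs0, hs1⟩ := hs
      have h2 : (0:ℝ) < 1 + s * u := by nlinarith
      rcases eq_or_lt_of_le hs1 with h | h
      · have : f' s = 0 := by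
          simp [hf', ← h]
        rw [this]
        simp only [norm_zero, norm_nonneg]
      · have h1 : (0:ℝ) < 1 - s := by linarith
        have hw : (0:ℝ) < Real.sqrt (1 - s) := Real.sqrt_pos.2 h1
        have hrpow : (1 - s) ^ (-(1/2) : ℝ) = (Real.sqrt (1 - s))⁻¹ := by
          rw [Real.rpow_neg h1.le, Real.sqrt_eq_rpow]
        simp only [hf', Real.norm_eq_abs]
        rw [hrpow, abs_mul, abs_div]
        have hden : |(1 + s * u) ^ 3| = (1 + s * u)^3 := abs_of_pos (pow_pos h2 3)
        have hnum : |1 + (4 - 3*s) * u| ≤ 1 + 4 * u := by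
          rw [abs_of_nonneg (by nlinarith)]
          nlinarith
        have h3 : (1:ℝ) ≤ (1 + s * u)^3 := one_le_pow₀ (by nlinarith)
        have hfrac : |1 + (4 - 3*s) * u| / (1 + s * u)^3 ≤ 1 + 4*u := by
          rw [hden] at *
          rw [div_le_iff₀ (by positivity)]
          nlinarith [abs_nonneg (1 + (4 - 3*s)*u)]
        have habs2 : |1 / (2 * Real.sqrt (1 - s))| = 1 / (2 * Real.sqrt (1 - s)) := by
          rw [abs_of_pos]; positivity
        rw [hden, habs2]
        have hineq : 1 / (2 * Real.sqrt (1 - s)) ≤ (Real.sqrt (1 - s))⁻¹ := by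
          rw [one_div, mul_inv]
          nlinarith [inv_nonneg.2 hw.le, inv_pos.2 hw]
        calc |1 + (4 - 3*s) * u| / (1 + s * u)^3 * (1 / (2 * Real.sqrt (1 - s)))
            ≤ (1 + 4*u) * (Real.sqrt (1 - s))⁻¹ := by
              apply mul_le_mul hfrac hineq (by positivity) (by positivity)
          _ ≤ ‖(1 + 4*u) * (Real.sqrt (1 - s))⁻¹‖ := le_abs_self _
  have key := intervalIntegral.integral_eq_sub_of_hasDeriv_right_of_le (by norm_num)
    hcont hderiv hint
  rw [key, hF]
  norm_num
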